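/- Let 0 < R < P be real constants, let φ : [0,∞) → [0,∞) be an increasing, non-constant, convex function, and for each integer m ≥ 1 define F_m(t) = ∫_{tR}^{tP} (y − tR)^{m−1}/(P−R)^m · exp(−φ(y)) dy. Then for every integer i ≥ 2, liminf_{t→∞} ln F_i(t) / ln F_{i−1}(t) = 1. Moreover, for every α > 1 the set {t ∈ [0,∞) : (−ln F_i(t))/(−ln F_{i−1}(t)) > α} has finite Lebesgue measure. -/

import Mathlib

open MeasureTheory Filter Set
-- integrability
lemma intInt (φ : ℝ → ℝ) (hφmono : MonotoneOn φ (Ici 0)) (a : ℝ) (k : ℕ)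
    {c d : ℝ} (hc : 0 ≤ c) (hcd : c ≤ d) :
    IntervalIntegrable (fun y => (y - a) ^ k * Real.exp (-φ y)) volume c d := by
  have h1 : AntitoneOn (fun y => Real.exp (-φ y)) (uIcc c d) := by
    intro x hx y hy hxy
    have hsub : uIcc c d ⊆ Ici 0 := by
      rw [uIcc_of_le hcd]
      exact fun z hz => le_trans hc hz.1
    exact Real.exp_le_exp.2 (neg_le_neg (hφmono (hsub hx) (hsub hy) hxy))
  exact (h1.intervalIntegrable).continuousOn_mul
    (Continuous.continuousOn (by continuity))

lemma pow_integral (a c d : ℝ) (k : ℕ) :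
    ∫ y in c..d, (y - a) ^ k = ((d - a) ^ (k + 1) - (c - a) ^ (k + 1)) / (k + 1) := by
  rw [intervalIntegral.integral_comp_sub_right (fun y => y ^ k) a, integral_pow]

lemma int_upper (φ : ℝ → ℝ) (hφmono : MonotoneOn φ (Ici 0)) (a : ℝ) (k : ℕ)
    {c d : ℝ} (hc : 0 ≤ c) (hac : a ≤ c) (hcd : c ≤ d) :
    ∫ y in c..d, (y - a) ^ k * Real.exp (-φ y)
      ≤ Real.exp (-φ c) * (((d - a) ^ (k + 1) - (c - a) ^ (k + 1)) / (k + 1)) := by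
  have h := intervalIntegral.integral_mono_on hcd (intInt φ hφmono a k hc hcd)
    (((continuous_const.mul ((continuous_id.sub continuous_const).pow k)).intervalIntegrable c d))
    (f := fun y => (y - a) ^ k * Real.exp (-φ y))
    (g := fun y => Real.exp (-φ c) * (y - a) ^ k) ?_
  · calc ∫ y in c..d, (y - a) ^ k * Real.exp (-φ y)
        ≤ ∫ y in c..d, Real.exp (-φ c) * (y - a) ^ k := h
      _ = Real.exp (-φ c) * (((d - a) ^ (k + 1) - (c - a) ^ (k + 1)) / (k + 1)) := by
          rw [intervalIntegral.integral_const_mul, pow_integral]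
  · intro x hx
    have h1 : Real.exp (-φ x) ≤ Real.exp (-φ c) :=
      Real.exp_le_exp.2 (neg_le_neg (hφmono (mem_Ici.2 hc) (mem_Ici.2 (hc.trans hx.1)) hx.1))
    have h2 : 0 ≤ (x - a) ^ k := pow_nonneg (by linarith [hx.1]) k
    calc (x - a) ^ k * Real.exp (-φ x) ≤ (x - a) ^ k * Real.exp (-φ c) :=
          mul_le_mul_of_nonneg_left h1 h2
      _ = Real.exp (-φ c) * (x - a) ^ k := mul_comm _ _

lemma int_lower (φ : ℝ → ℝ) (hφmono : MonotoneOn φ (Ici 0)) (a : ℝ) (k : ℕ)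
    {c d : ℝ} (hc : 0 ≤ c) (hac : a ≤ c) (hcd : c ≤ d) :
    Real.exp (-φ d) * (((d - a) ^ (k + 1) - (c - a) ^ (k + 1)) / (k + 1))
      ≤ ∫ y in c..d, (y - a) ^ k * Real.exp (-φ y) := by
  have h := intervalIntegral.integral_mono_on hcd
    (((continuous_const.mul ((continuous_id.sub continuous_const).pow k)).intervalIntegrable c d))
    (intInt φ hφmono a k hc hcd)
    (f := fun y => Real.exp (-φ d) * (y - a) ^ k)
    (g := fun y => (y - a) ^ k * Real.exp (-φ y)) ?_
  · calc Real.exp (-φ d) * (((d - a) ^ (k + 1) - (c - a) ^ (k + 1)) / (k + 1))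
        = ∫ y in c..d, Real.exp (-φ d) * (y - a) ^ k := by
          rw [intervalIntegral.integral_const_mul, pow_integral]
      _ ≤ _ := h
  · intro x hx
    have h1 : Real.exp (-φ d) ≤ Real.exp (-φ x) :=
      Real.exp_le_exp.2 (neg_le_neg (hφmono (mem_Ici.2 (hc.trans hx.1)) (mem_Ici.2 (hc.trans hcd)) hx.2))
    have h2 : 0 ≤ (x - a) ^ k := pow_nonneg (by linarith [hx.1]) k
    calc Real.exp (-φ d) * (x - a) ^ k ≤ Real.exp (-φ x) * (x - a) ^ k :=
          mul_le_mul_of_nonneg_right h1 h2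
      _ = (x - a) ^ k * Real.exp (-φ x) := mul_comm _ _

lemma int_pos (φ : ℝ → ℝ) (hφmono : MonotoneOn φ (Ici 0)) (a : ℝ) (k : ℕ)
    {c d : ℝ} (hc : 0 ≤ c) (hac : a ≤ c) (hcd : c < d) :
    0 < ∫ y in c..d, (y - a) ^ k * Real.exp (-φ y) := by
  apply intervalIntegral.intervalIntegral_pos_of_pos_on (intInt φ hφmono a k hc hcd.le) _ hcd
  intro x hx
  exact mul_pos (pow_pos (by linarith [hx.1]) k) (Real.exp_pos _)

lemma core2 (φ : ℝ → ℝ) (hφmono : MonotoneOn φ (Ici 0)) {a b : ℝ} (ha : 0 ≤ a)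
    (hab : a ≤ b) (k : ℕ) :
    ∫ y in a..b, (y - a) ^ k * Real.exp (-φ y)
      ≤ Real.exp (-φ a) * (b - a) ^ (k + 1) / (k + 1) := by
  have h := int_upper φ hφmono a k ha le_rfl hab
  simpa [sub_self, zero_pow, mul_div_assoc] using h

lemma core3 (φ : ℝ → ℝ) (hφmono : MonotoneOn φ (Ici 0)) {a b δ : ℝ} (ha : 0 ≤ a)
    (hδ : 0 < δ) (hδb : a + δ ≤ b) (k : ℕ) :
    Real.exp (-φ (a + δ)) * δ ^ (k + 1) / (k + 1)
      ≤ ∫ y in a..b, (y - a) ^ k * Real.exp (-φ y) := by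
  have hab : a ≤ b := by linarith
  have hsplit := intervalIntegral.integral_add_adjacent_intervals
    (intInt φ hφmono a k ha (by linarith : a ≤ a + δ))
    (intInt φ hφmono a k (by linarith : (0:ℝ) ≤ a + δ) hδb)
  have h1 := int_lower φ hφmono a k ha le_rfl (by linarith : a ≤ a + δ)
  have h2 : (0:ℝ) ≤ ∫ y in (a+δ)..b, (y - a) ^ k * Real.exp (-φ y) := by
    apply intervalIntegral.integral_nonneg hδb
    intro x hx
    exact mul_nonneg (pow_nonneg (by linarith [hx.1]) k) (Real.exp_pos _).le
  have h3 : Real.exp (-φ (a + δ)) * (((a + δ - a) ^ (k+1) - (a - a) ^ (k+1)) / (k+1))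
      = Real.exp (-φ (a + δ)) * δ ^ (k + 1) / (k + 1) := by
    rw [add_sub_cancel_left, sub_self, zero_pow (by omega), sub_zero, mul_div_assoc]
  rw [← hsplit]
  rw [h3] at h1
  linarith

lemma core4 (φ : ℝ → ℝ) (hφmono : MonotoneOn φ (Ici 0)) {a b : ℝ} (ha : 0 ≤ a)
    (hab : a ≤ b) (k : ℕ) :
    ∫ y in a..b, (y - a) ^ (k + 1) * Real.exp (-φ y)
      ≤ (b - a) * ∫ y in a..b, (y - a) ^ k * Real.exp (-φ y) := by
  have h := intervalIntegral.integral_mono_on hab (intInt φ hφmono a (k+1) ha hab)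
    ((intInt φ hφmono a k ha hab).const_mul (b - a))
    (f := fun y => (y - a) ^ (k+1) * Real.exp (-φ y))
    (g := fun y => (b - a) * ((y - a) ^ k * Real.exp (-φ y))) ?_
  · simpa [intervalIntegral.integral_const_mul] using h
  · intro x hx
    have h1 : 0 ≤ x - a := by linarith [hx.1]
    have h2 : x - a ≤ b - a := by linarith [hx.2]
    calc (x - a) ^ (k+1) * Real.exp (-φ x) = (x-a) * ((x - a) ^ k * Real.exp (-φ x)) := by ring
      _ ≤ (b - a) * ((x - a) ^ k * Real.exp (-φ x)) := by
          apply mul_le_mul_of_nonneg_right h2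
          exact mul_nonneg (pow_nonneg h1 k) (Real.exp_pos _).le

lemma core5 (φ : ℝ → ℝ) (hφmono : MonotoneOn φ (Ici 0)) {a b ε : ℝ} (ha : 0 ≤ a)
    (hε : 0 < ε) (hεb : a + ε ≤ b) (k : ℕ) :
    ε * ((∫ y in a..b, (y - a) ^ k * Real.exp (-φ y))
        - Real.exp (-φ a) * ε ^ (k + 1) / (k + 1))
      ≤ ∫ y in a..b, (y - a) ^ (k + 1) * Real.exp (-φ y) := by
  have haε : (0:ℝ) ≤ a + ε := by linarith
  have h0 : a ≤ a + ε := by linarith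
  -- split both integrals
  have hsplit1 := intervalIntegral.integral_add_adjacent_intervals
    (intInt φ hφmono a k ha h0) (intInt φ hφmono a k haε hεb)
  have hsplit2 := intervalIntegral.integral_add_adjacent_intervals
    (intInt φ hφmono a (k+1) ha h0) (intInt φ hφmono a (k+1) haε hεb)
  -- first piece of (k+1) integral nonneg
  have h1 : (0:ℝ) ≤ ∫ y in a..(a+ε), (y - a) ^ (k+1) * Real.exp (-φ y) :=
    intervalIntegral.integral_nonneg h0 (fun x hx =>
      mul_nonneg (pow_nonneg (by linarith [hx.1]) _) (Real.exp_pos _).le)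
  -- on [a+ε, b] : (y-a)^{k+1} ≥ ε (y-a)^k
  have h2 : ε * (∫ y in (a+ε)..b, (y - a) ^ k * Real.exp (-φ y))
      ≤ ∫ y in (a+ε)..b, (y - a) ^ (k+1) * Real.exp (-φ y) := by
    have h := intervalIntegral.integral_mono_on hεb
      ((intInt φ hφmono a k haε hεb).const_mul ε)
      (intInt φ hφmono a (k+1) haε hεb)
      (f := fun y => ε * ((y - a) ^ k * Real.exp (-φ y)))
      (g := fun y => (y - a) ^ (k+1) * Real.exp (-φ y)) ?_
    · simpa [intervalIntegral.integral_const_mul] using h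
    · intro x hx
      have hxa : ε ≤ x - a := by linarith [hx.1]
      calc ε * ((x - a) ^ k * Real.exp (-φ x)) ≤ (x-a) * ((x - a) ^ k * Real.exp (-φ x)) := by
            apply mul_le_mul_of_nonneg_right hxa
            exact mul_nonneg (pow_nonneg (by linarith) k) (Real.exp_pos _).le
        _ = (x - a) ^ (k+1) * Real.exp (-φ x) := by ring
  -- small piece of k integral bounded above
  have h3 : ∫ y in a..(a+ε), (y - a) ^ k * Real.exp (-φ y)
      ≤ Real.exp (-φ a) * ε ^ (k + 1) / (k + 1) := by
    have h := core2 φ hφmono ha h0 k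
    simpa [add_sub_cancel_left] using h
  have h4 : (0:ℝ) ≤ ∫ y in (a+ε)..b, (y - a) ^ k * Real.exp (-φ y) :=
    intervalIntegral.integral_nonneg hεb (fun x hx =>
      mul_nonneg (pow_nonneg (by linarith [hx.1]) _) (Real.exp_pos _).le)
  nlinarith [h2, h3, h1, hε.le]
lemma growth (φ : ℝ → ℝ) (hφmono : MonotoneOn φ (Ici 0)) (hφconv : ConvexOn ℝ (Ici 0) φ)
    (hφnonneg : ∀ x ∈ Ici (0:ℝ), 0 ≤ φ x)
    (hφnonconst : ∃ a ∈ Ici (0:ℝ), ∃ b ∈ Ici (0:ℝ), φ a ≠ φ b) :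
    ∃ v κ : ℝ, 0 ≤ v ∧ 0 < κ ∧ ∀ x, v ≤ x → κ * (x - v) ≤ φ x := by
  obtain ⟨u₀, hu₀, w₀, hw₀, hne₀⟩ := hφnonconst
  obtain ⟨u, w, hu, hw, huw, hlt⟩ :
      ∃ u w : ℝ, 0 ≤ u ∧ 0 ≤ w ∧ u < w ∧ φ u < φ w := by
    rcases lt_trichotomy u₀ w₀ with h | h | h
    · exact ⟨u₀, w₀, hu₀, hw₀, h, lt_of_le_of_ne (hφmono hu₀ hw₀ h.le) hne₀⟩
    · exact absurd (by rw [h]) hne₀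
    · exact ⟨w₀, u₀, hw₀, hu₀, h, lt_of_le_of_ne (hφmono hw₀ hu₀ h.le) (Ne.symm hne₀)⟩
  have hκ0 : 0 < (φ w - φ u) / (w - u) := div_pos (by linarith) (by linarith)
  refine ⟨w, (φ w - φ u) / (w - u), hw, hκ0, fun x hx => ?_⟩
  rcases eq_or_lt_of_le hx with h | h
  · rw [← h]; simpa using hφnonneg w hw
  · have hs := hφconv.slope_mono_adjacent hu (mem_Ici.2 (hw.trans hx)) huw h
    rw [div_le_div_iff₀ (by linarith) (by linarith)] at hs
    have hφw : 0 ≤ φ w := hφnonneg w hw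
    rw [div_mul_eq_mul_div, div_le_iff₀ (by linarith)]
    nlinarith
lemma ev_linlog (A B C q : ℝ) (hA : 0 < A) (hq : 0 < q) :
    ∀ᶠ t : ℝ in atTop, B * Real.log (t * q) + C ≤ A * t := by
  have h1 : (fun t : ℝ => B * Real.log t) =o[atTop] (id : ℝ → ℝ) :=
    Real.isLittleO_log_id_atTop.const_mul_left B
  have h2 := h1.def (half_pos hA)
  filter_upwards [h2, eventually_ge_atTop (1:ℝ),
    eventually_ge_atTop ((2/A) * (B * Real.log q + C))] with t h2t ht1 htC
  have ht0 : 0 < t := by linarith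
  rw [Real.log_mul (by linarith) (by linarith)]
  have hb : B * Real.log t ≤ A/2 * t := by
    have := le_abs_self (B * Real.log t)
    rw [Real.norm_eq_abs, Real.norm_eq_abs, id] at h2t
    rw [abs_of_pos ht0] at h2t
    linarith
  have hc : B * Real.log q + C ≤ A/2 * t := by
    have h3 : A/2 * ((2/A) * (B * Real.log q + C)) = B * Real.log q + C := by
      field_simp
    nlinarith
  linarith

lemma badmeas (φ : ℝ → ℝ) (hφmono : MonotoneOn φ (Ici 0))
    (hφnonneg : ∀ x ∈ Ici (0:ℝ), 0 ≤ φ x)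
    (R η T : ℝ) (hR : 0 < R) (hη : 0 < η) (hT : 0 ≤ T) :
    volume {t : ℝ | T ≤ t ∧ φ (t * R) + 1 ≤ φ (t * R + Real.exp (-(η * φ (t * R))))} < ⊤ := by
  set B : Set ℝ := {t : ℝ | T ≤ t ∧ φ (t * R) + 1 ≤ φ (t * R + Real.exp (-(η * φ (t * R))))}
    with hB
  have hmemnn : ∀ t ∈ B, 0 ≤ φ (t * R) := by
    intro t ht
    exact hφnonneg _ (mem_Ici.2 (mul_nonneg (hT.trans ht.1) hR.le))
  set Bk : ℕ → Set ℝ := fun k => {t ∈ B | (k : ℝ) ≤ φ (t * R) ∧ φ (t * R) < k + 1} with hBk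
  have hcover : B ⊆ ⋃ k : ℕ, Bk k := by
    intro t ht
    refine mem_iUnion.2 ⟨⌊φ (t * R)⌋₊, ht, Nat.floor_le (hmemnn t ht), Nat.lt_floor_add_one _⟩
  -- diameter bound
  have hdiam : ∀ k : ℕ, ∀ t ∈ Bk k, ∀ t' ∈ Bk k, t' ≤ t + Real.exp (-(η * k)) / R := by
    intro k t ht t' ht'
    by_contra hgt
    push_neg at hgt
    have h1 : t * R + Real.exp (-(η * φ (t * R))) ≤ t' * R := by
      have he : Real.exp (-(η * φ (t * R))) ≤ Real.exp (-(η * k)) :=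
        Real.exp_le_exp.2 (by nlinarith [ht.2.1])
      have : t * R + Real.exp (-(η * k)) ≤ t' * R := by
        have := (div_lt_iff₀ hR).1 (by linarith : Real.exp (-(η * k)) / R < t' - t)
        nlinarith
      linarith
    have h2 : φ (t * R + Real.exp (-(η * φ (t * R)))) ≤ φ (t' * R) := by
      apply hφmono _ _ h1
      · have hta : 0 ≤ t * R := mul_nonneg (hT.trans ht.1.1) hR.le
        have := Real.exp_pos (-(η * φ (t * R)))
        exact mem_Ici.2 (by linarith)
      · exact mem_Ici.2 (mul_nonneg (hT.trans ht'.1.1) hR.le)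
    have h3 := ht.1.2
    have h4 := ht'.2.2
    have h5 := ht.2.1
    linarith
  have hvol : ∀ k : ℕ, volume (Bk k) ≤ ENNReal.ofReal (2 * Real.exp (-(η * k)) / R) := by
    intro k
    rcases eq_empty_or_nonempty (Bk k) with h | ⟨t₀, ht₀⟩
    · simp [h]
    · have hsub : Bk k ⊆ Icc (t₀ - Real.exp (-(η * k)) / R) (t₀ + Real.exp (-(η * k)) / R) := by
        intro t ht
        constructor
        · have := hdiam k t ht t₀ ht₀; linarith
        · exact hdiam k t₀ ht₀ t ht
      calc volume (Bk k) ≤ volume (Icc (t₀ - Real.exp (-(η * k)) / R)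
            (t₀ + Real.exp (-(η * k)) / R)) := measure_mono hsub
        _ = ENNReal.ofReal (2 * Real.exp (-(η * k)) / R) := by
            rw [Real.volume_Icc]; ring_nf
  calc volume B ≤ volume (⋃ k : ℕ, Bk k) := measure_mono hcover
    _ ≤ ∑' k : ℕ, volume (Bk k) := measure_iUnion_le _
    _ ≤ ∑' k : ℕ, ENNReal.ofReal (2 * Real.exp (-(η * k)) / R) := ENNReal.tsum_le_tsum hvol
    _ < ⊤ := by
        have hsummable : Summable (fun k : ℕ => 2 * Real.exp (-(η * k)) / R) := by
          have : ∀ k : ℕ, 2 * Real.exp (-(η * k)) / R = (2 / R) * Real.exp (-η) ^ k := by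
            intro k
            rw [← Real.exp_nat_mul]
            ring_nf
          simp_rw [this]
          exact (summable_geometric_of_lt_one (Real.exp_pos _).le
            (Real.exp_lt_one_iff.2 (by linarith))).mul_left _
        rw [← ENNReal.ofReal_tsum_of_nonneg (fun k => by positivity) hsummable]
        exact ENNReal.ofReal_lt_top
lemma per_t (φ : ℝ → ℝ) (hφmono : MonotoneOn φ (Ici 0)) (R P : ℝ) (hR : 0 < R) (hRP : R < P)
    (k : ℕ) (t : ℝ) (ht1 : 1 ≤ t) (htq : 1 ≤ t * (P - R)) :
    0 < (∫ y in t*R..t*P, (y - t*R) ^ k * Real.exp (-φ y)) ∧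
    0 < (∫ y in t*R..t*P, (y - t*R) ^ (k+1) * Real.exp (-φ y)) ∧
    Real.log (∫ y in t*R..t*P, (y - t*R) ^ k * Real.exp (-φ y))
      ≤ -φ (t*R) + ((k:ℝ)+1) * Real.log (t*(P-R)) - Real.log ((k:ℝ)+1) ∧
    (∀ δ : ℝ, 0 < δ → δ ≤ 1 →
      -φ (t*R + δ) + ((k:ℝ)+1) * Real.log δ - Real.log ((k:ℝ)+1)
        ≤ Real.log (∫ y in t*R..t*P, (y - t*R) ^ k * Real.exp (-φ y))) ∧
    Real.log (∫ y in t*R..t*P, (y - t*R) ^ (k+1) * Real.exp (-φ y))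
      ≤ Real.log (t*(P-R)) + Real.log (∫ y in t*R..t*P, (y - t*R) ^ k * Real.exp (-φ y)) ∧
    Real.log (∫ y in t*R..t*P, (y - t*R) ^ k * Real.exp (-φ y)) - Real.log 2
      + ((k:ℝ)+1)⁻¹ * (Real.log ((k:ℝ)+1)
          + Real.log (∫ y in t*R..t*P, (y - t*R) ^ k * Real.exp (-φ y))
          + φ (t*R) - Real.log 2)
      ≤ Real.log (∫ y in t*R..t*P, (y - t*R) ^ (k+1) * Real.exp (-φ y)) := by
  have ht0 : 0 < t := lt_of_lt_of_le one_pos ht1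
  have hq0 : 0 < P - R := by linarith
  have ha : 0 ≤ t * R := by positivity
  have hab : t * R < t * P := by nlinarith
  have hba : t * P - t * R = t * (P - R) := by ring
  have htq0 : 0 < t * (P - R) := by positivity
  set Jn := ∫ y in t*R..t*P, (y - t*R) ^ k * Real.exp (-φ y) with hJn
  set Ji := ∫ y in t*R..t*P, (y - t*R) ^ (k+1) * Real.exp (-φ y) with hJi
  have hk1 : (0:ℝ) < (k:ℝ) + 1 := by positivity
  have hcast : ((k+1 : ℕ) : ℝ) = (k:ℝ) + 1 := by push_cast; ring
  have hpn : 0 < Jn := int_pos φ hφmono (t*R) k ha le_rfl hab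
  have hpi : 0 < Ji := int_pos φ hφmono (t*R) (k+1) ha le_rfl hab
  have hφa0 : 0 ≤ t * R := ha
  refine ⟨hpn, hpi, ?_, ?_, ?_, ?_⟩
  · -- P2
    have hU := core2 φ hφmono ha hab.le k
    rw [hba] at hU
    have hUpos : 0 < Real.exp (-φ (t*R)) * (t*(P-R)) ^ (k+1) / ((k:ℝ)+1) := by positivity
    calc Real.log Jn ≤ Real.log (Real.exp (-φ (t*R)) * (t*(P-R)) ^ (k+1) / ((k:ℝ)+1)) :=
          (Real.log_le_log_iff hpn hUpos).2 hU
      _ = -φ (t*R) + ((k:ℝ)+1) * Real.log (t*(P-R)) - Real.log ((k:ℝ)+1) := by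
          rw [Real.log_div (by positivity) (by positivity),
            Real.log_mul (by positivity) (by positivity), Real.log_exp, Real.log_pow]
          push_cast; ring
  · -- P3
    intro δ hδ hδ1
    have hδb : t*R + δ ≤ t*P := by nlinarith
    have hLo := core3 φ hφmono ha hδ hδb k
    
    have hLopos : 0 < Real.exp (-φ (t*R + δ)) * δ ^ (k+1) / ((k:ℝ)+1) := by positivity
    calc -φ (t*R + δ) + ((k:ℝ)+1) * Real.log δ - Real.log ((k:ℝ)+1)
        = Real.log (Real.exp (-φ (t*R + δ)) * δ ^ (k+1) / ((k:ℝ)+1)) := by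
          rw [Real.log_div (by positivity) (by positivity),
            Real.log_mul (by positivity) (by positivity), Real.log_exp, Real.log_pow]
          push_cast; ring
      _ ≤ Real.log Jn := (Real.log_le_log_iff hLopos hpn).2 hLo
  · -- P4
    have h4 := core4 φ hφmono ha hab.le k
    rw [hba] at h4
    calc Real.log Ji ≤ Real.log ((t*(P-R)) * Jn) :=
          (Real.log_le_log_iff hpi (by positivity)).2 h4
      _ = Real.log (t*(P-R)) + Real.log Jn := Real.log_mul (by positivity) (by positivity)
  · -- P5
    set base := ((k:ℝ)+1) * Jn * Real.exp (φ (t*R)) / 2 with hbase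
    have hbase0 : 0 < base := by positivity
    set ε := base ^ (((k:ℝ)+1)⁻¹) with hε
    have hε0 : 0 < ε := Real.rpow_pos_of_pos hbase0 _
    have hεpow : ε ^ (k+1) = base := by
      rw [hε, ← hcast]
      exact Real.rpow_inv_natCast_pow hbase0.le (by omega)
    have hU := core2 φ hφmono ha hab.le k
    rw [hba] at hU
    have hεb : ε ^ (k+1) ≤ (t*(P-R)) ^ (k+1) := by
      rw [hεpow, hbase]
      have hee : Real.exp (φ (t*R)) * Real.exp (-φ (t*R)) = 1 := by
        rw [← Real.exp_add]; simp
      have h2 : ((k:ℝ)+1) * Jn * Real.exp (φ (t*R)) / 2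
          ≤ ((k:ℝ)+1) * (Real.exp (-φ (t*R)) * (t*(P-R)) ^ (k+1) / ((k:ℝ)+1))
            * Real.exp (φ (t*R)) / 2 := by
        have := Real.exp_pos (φ (t*R))
        gcongr
      calc ((k:ℝ)+1) * Jn * Real.exp (φ (t*R)) / 2
          ≤ ((k:ℝ)+1) * (Real.exp (-φ (t*R)) * (t*(P-R)) ^ (k+1) / ((k:ℝ)+1))
            * Real.exp (φ (t*R)) / 2 := h2
        _ = (t*(P-R)) ^ (k+1) * (Real.exp (φ (t*R)) * Real.exp (-φ (t*R))) / 2 := by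
            field_simp
        _ ≤ (t*(P-R)) ^ (k+1) := by
            rw [hee]
            have : (0:ℝ) < (t*(P-R)) ^ (k+1) := by positivity
            linarith
    have hεtq : ε ≤ t*(P-R) := le_of_pow_le_pow_left₀ (by omega) htq0.le hεb
    have h5 := core5 φ hφmono ha hε0 (by linarith [hεtq] : t*R + ε ≤ t*P) k
    rw [hεpow] at h5
    have hkey : Real.exp (-φ (t*R)) * base / ((k:ℝ)+1) = Jn / 2 := by
      rw [hbase]
      have hee : Real.exp (-φ (t*R)) * Real.exp (φ (t*R)) = 1 := by
        rw [← Real.exp_add]; simp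
      field_simp
      linear_combination hee
    rw [hkey] at h5
    have h6 : ε * (Jn / 2) ≤ Ji := by
      calc ε * (Jn / 2) = ε * (Jn - Jn / 2) := by ring
        _ ≤ Ji := h5
    have hlogε : Real.log ε = ((k:ℝ)+1)⁻¹ * (Real.log ((k:ℝ)+1) + Real.log Jn
        + φ (t*R) - Real.log 2) := by
      rw [hε, Real.log_rpow hbase0, hbase]
      rw [Real.log_div (by positivity) (by norm_num),
        Real.log_mul (by positivity) (by positivity),
        Real.log_mul (by positivity) (by positivity), Real.log_exp]
      try ring
    calc Real.log Jn - Real.log 2 + ((k:ℝ)+1)⁻¹ * (Real.log ((k:ℝ)+1) + Real.log Jn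
          + φ (t*R) - Real.log 2)
        = Real.log (ε * (Jn / 2)) := by
          rw [Real.log_mul (by positivity) (by positivity),
            Real.log_div (by positivity) (by norm_num), hlogε]
          ring
      _ ≤ Real.log Ji := (Real.log_le_log_iff (by positivity) hpi).2 h6

set_option maxHeartbeats 2000000 in
theorem stmt_4 (R P : ℝ) (hR : 0 < R) (hRP : R < P)
    (φ : ℝ → ℝ)
    (hφmono : MonotoneOn φ (Ici 0))
    (hφconv : ConvexOn ℝ (Ici 0) φ)
    (hφnonneg : ∀ x ∈ Ici (0:ℝ), 0 ≤ φ x)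
    (hφnonconst : ∃ a ∈ Ici (0:ℝ), ∃ b ∈ Ici (0:ℝ), φ a ≠ φ b)
    (F : ℕ → ℝ → ℝ)
    (hF : ∀ m : ℕ, 1 ≤ m → ∀ t : ℝ, 0 < t →
      F m t = ∫ y in (t * R)..(t * P),
        (y - t * R) ^ (m - 1) / (P - R) ^ m * Real.exp (-φ y)) :
    ∀ i : ℕ, 2 ≤ i →
      (liminf (fun t : ℝ => Real.log (F i t) / Real.log (F (i - 1) t)) atTop = 1 ∧
       ∀ α : ℝ, 1 < α →
         volume {t : ℝ | 0 ≤ t ∧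
           α < (-Real.log (F i t)) / (-Real.log (F (i - 1) t))} < ⊤) := by
  intro i hi
  obtain ⟨k, rfl⟩ : ∃ k, i = k + 2 := ⟨i - 2, by omega⟩
  have hsub : k + 2 - 1 = k + 1 := rfl
  rw [hsub]
  have hq0 : 0 < P - R := by linarith
  obtain ⟨v, κ, hv0, hκ0, hgrow⟩ := growth φ hφmono hφconv hφnonneg hφnonconst
  -- rewrite F in terms of raw integrals
  have hFn : ∀ t : ℝ, 0 < t → F (k+1) t
      = ((P-R)^(k+1))⁻¹ * ∫ y in t*R..t*P, (y - t*R) ^ k * Real.exp (-φ y) := by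
    intro t ht
    rw [hF (k+1) (by omega) t ht, ← intervalIntegral.integral_const_mul]
    apply intervalIntegral.integral_congr
    intro y _
    simp only [Nat.add_sub_cancel]
    ring
  have hFi : ∀ t : ℝ, 0 < t → F (k+2) t
      = ((P-R)^(k+2))⁻¹ * ∫ y in t*R..t*P, (y - t*R) ^ (k+1) * Real.exp (-φ y) := by
    intro t ht
    rw [hF (k+2) (by omega) t ht, ← intervalIntegral.integral_const_mul]
    apply intervalIntegral.integral_congr
    intro y _
    show (y - t*R) ^ (k+2-1) / (P - R) ^ (k+2) * Real.exp (-φ y) = _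
    simp only [show k+2-1 = k+1 from rfl]
    ring
  -- the key quantitative lemma
  have key : ∀ α : ℝ, 1 < α → ∃ T : ℝ, 1 ≤ T ∧ ∀ t, T ≤ t →
      (0 < -Real.log (F (k+1) t) ∧
       0 < -Real.log (F (k+2) t) ∧
       -Real.log (F (k+1) t) - Real.log t ≤ -Real.log (F (k+2) t) ∧
       κ*R/2*t ≤ -Real.log (F (k+1) t) ∧
       (φ (t*R + Real.exp (-((α-1)/2 * φ (t*R)))) < φ (t*R) + 1 →
         -Real.log (F (k+2) t) ≤ α * (-Real.log (F (k+1) t)))) := by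
    intro α hα
    have hη0 : 0 < (α-1)/2 := by linarith
    set η := (α-1)/2 with hηdef
    clear_value η
    have hαη : α = 1 + 2*η := by rw [hηdef]; ring
    have hk0 : (0:ℝ) ≤ (k:ℝ) := Nat.cast_nonneg k
    have hK11 : (1:ℝ) ≤ (k:ℝ)+1 := by linarith
    have hlk0 : 0 ≤ Real.log ((k:ℝ)+1) := Real.log_nonneg hK11
    have hl20 : 0 ≤ Real.log 2 := Real.log_nonneg (by norm_num)
    have EV : ∀ᶠ t : ℝ in atTop,
        (0 < -Real.log (F (k+1) t) ∧
         0 < -Real.log (F (k+2) t) ∧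
         -Real.log (F (k+1) t) - Real.log t ≤ -Real.log (F (k+2) t) ∧
         κ*R/2*t ≤ -Real.log (F (k+1) t) ∧
         (φ (t*R + Real.exp (-(η * φ (t*R)))) < φ (t*R) + 1 →
           -Real.log (F (k+2) t) ≤ α * (-Real.log (F (k+1) t)))) := by
      filter_upwards [eventually_ge_atTop (1:ℝ), eventually_ge_atTop (v/R),
        eventually_ge_atTop (1/(P-R)),
        ev_linlog (κ*R) ((k:ℝ)+1) (κ*v - ((k:ℝ)+1)*Real.log (P-R) + 1) (P-R) (by positivity) hq0,
        ev_linlog (κ*R/2) ((k:ℝ)+1) (κ*v - ((k:ℝ)+1)*Real.log (P-R)) (P-R) (by positivity) hq0,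
        ev_linlog (κ*R) (((k:ℝ)+1)+1) (κ*v - (((k:ℝ)+1)+1)*Real.log (P-R) + 1) (P-R) (by positivity) hq0,
        ev_linlog (η*(κ*R)) (2*η*((k:ℝ)+1))
          ((2*Real.log 2+1+Real.log ((k:ℝ)+1)) + (((k:ℝ)+1)+1)*Real.log (P-R) - (1+2*η)*((k:ℝ)+1)*Real.log (P-R) + η*(κ*v)) (P-R) (by positivity) hq0]
        with t ht1 htv htq' h4 h5 h6 h7
      have ht0 : 0 < t := lt_of_lt_of_le one_pos ht1
      have htq : 1 ≤ t*(P-R) := by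
        rw [div_le_iff₀ hq0] at htq'; linarith
      have htRv : v ≤ t*R := by
        rw [div_le_iff₀ hR] at htv; linarith
      have htR0 : 0 ≤ t*R := by positivity
      obtain ⟨hpn, hpi, P2, P3, P4, P5⟩ := per_t φ hφmono R P hR hRP k t ht1 htq
      have hφa0 : 0 ≤ φ (t*R) := hφnonneg _ (mem_Ici.2 htR0)
      have hφalb : κ*(t*R - v) ≤ φ (t*R) := hgrow _ htRv
      have hLt : Real.log (t*(P-R)) = Real.log t + Real.log (P-R) :=
        Real.log_mul (ne_of_gt ht0) (ne_of_gt hq0)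
      have hLt0 : 0 ≤ Real.log (t*(P-R)) := Real.log_nonneg htq
      -- log identities for F
      have hFneq : Real.log (F (k+1) t)
          = Real.log (∫ y in t*R..t*P, (y - t*R) ^ k * Real.exp (-φ y)) - ((k:ℝ)+1) * Real.log (P-R) := by
        rw [hFn t ht0, Real.log_mul (inv_ne_zero (pow_ne_zero _ (ne_of_gt hq0))) (ne_of_gt hpn),
          Real.log_inv, Real.log_pow]
        push_cast
        ring
      have hFieq : Real.log (F (k+2) t)
          = Real.log (∫ y in t*R..t*P, (y - t*R) ^ (k+1) * Real.exp (-φ y)) - (((k:ℝ)+1)+1) * Real.log (P-R) := by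
        rw [hFi t ht0, Real.log_mul (inv_ne_zero (pow_ne_zero _ (ne_of_gt hq0))) (ne_of_gt hpi),
          Real.log_inv, Real.log_pow]
        push_cast
        ring
      rw [hFneq, hFieq]
      set LJn := Real.log (∫ y in t*R..t*P, (y - t*R) ^ k * Real.exp (-φ y)) with hLJn
      set LJi := Real.log (∫ y in t*R..t*P, (y - t*R) ^ (k+1) * Real.exp (-φ y)) with hLJi
      clear_value LJn LJi
      have c1 : 0 < -(LJn - ((k:ℝ)+1) * Real.log (P-R)) := by
        rw [hLt] at P2 h4
        linarith
      have c2 : 0 < -(LJi - (((k:ℝ)+1)+1) * Real.log (P-R)) := by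
        rw [hLt] at P2 P4 h6
        linarith
      have c3 : -(LJn - ((k:ℝ)+1) * Real.log (P-R)) - Real.log t
          ≤ -(LJi - (((k:ℝ)+1)+1) * Real.log (P-R)) := by
        rw [hLt] at P4
        linarith
      have c4 : κ*R/2*t ≤ -(LJn - ((k:ℝ)+1) * Real.log (P-R)) := by
        rw [hLt] at P2 h5
        linarith
      refine ⟨c1, c2, c3, c4, ?_⟩
      intro hgood
      -- good case
      have hδ0 : (0:ℝ) < Real.exp (-(η * φ (t*R))) := Real.exp_pos _
      have hδ1 : Real.exp (-(η * φ (t*R))) ≤ 1 :=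
        Real.exp_le_one_iff.2 (neg_nonpos.2 (mul_nonneg hη0.le hφa0))
      have A1 := P3 _ hδ0 hδ1
      rw [Real.log_exp] at A1
      -- A1 : -φ (t*R + δ) + ((k:ℝ)+1) * -(η * φ (t*R)) - lk ≤ LJn
      have hK1inv0 : (0:ℝ) < (((k:ℝ)+1))⁻¹ := by positivity
      have hK1inv1 : (((k:ℝ)+1))⁻¹ ≤ 1 := by
        rw [inv_le_one_iff₀]; right; exact hK11
      have hK1invK1 : (((k:ℝ)+1))⁻¹ * ((k:ℝ)+1) = 1 := by
        field_simp
      -- step : lower bound the inverse term in P5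
      have hinner : -1 - ((k:ℝ)+1)*(η * φ (t*R)) - Real.log 2
          ≤ Real.log ((k:ℝ)+1) + LJn + φ (t*R) - Real.log 2 := by
        linarith [A1, hgood]
      have step1 := mul_le_mul_of_nonneg_left hinner hK1inv0.le
      have step2 : (((k:ℝ)+1))⁻¹ * (-1 - ((k:ℝ)+1)*(η * φ (t*R)) - Real.log 2)
          = -(((k:ℝ)+1))⁻¹*(1+Real.log 2) - η * φ (t*R) := by
        linear_combination (-(η * φ (t*R))) * hK1invK1
      have step3 : (1+Real.log 2) * (((k:ℝ)+1))⁻¹ ≤ (1+Real.log 2) * 1 :=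
        mul_le_mul_of_nonneg_left hK1inv1 (by linarith)
      -- A2 : LJi ≥ LJn - stuff
      have A2 : LJn - (1 + 2*Real.log 2) - η * φ (t*R) ≤ LJi := by
        linarith [P5, step1, step2, step3]
      -- A3 : φa ≤ -LJn + K1 * Lt
      have A3 : φ (t*R) ≤ -LJn + ((k:ℝ)+1) * Real.log (t*(P-R)) := by
        linarith
      have hp1 : η * φ (t*R) ≤ η * (-LJn + ((k:ℝ)+1) * Real.log (t*(P-R))) :=
        mul_le_mul_of_nonneg_left A3 hη0.le
      have hXlb : κ*R*t - κ*v - ((k:ℝ)+1) * Real.log (t*(P-R)) ≤ -LJn := by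
        linarith [P2, hφalb, hlk0]
      have hp2 := mul_le_mul_of_nonneg_left hXlb hη0.le
      rw [hαη]
      rw [hLt] at hp1 hp2 h7
      linarith [A2, hp1, hp2, h7]
    rw [eventually_atTop] at EV
    obtain ⟨T0, hT0⟩ := EV
    exact ⟨max T0 1, le_max_right _ _, fun t ht => hT0 t (le_trans (le_max_left _ _) ht)⟩
  -- Part 2 : finite measure of the bad set
  have part2 : ∀ α : ℝ, 1 < α →
      volume {t : ℝ | 0 ≤ t ∧
        α < (-Real.log (F (k+2) t)) / (-Real.log (F (k+1) t))} < ⊤ := by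
    intro α hα
    obtain ⟨T, hT1, hTgood⟩ := key α hα
    have hT0 : (0:ℝ) ≤ T := by linarith
    have hsubset : {t : ℝ | 0 ≤ t ∧ α < (-Real.log (F (k+2) t)) / (-Real.log (F (k+1) t))}
        ⊆ Icc 0 T ∪ {t : ℝ | T ≤ t ∧ φ (t * R) + 1
            ≤ φ (t * R + Real.exp (-((α-1)/2 * φ (t * R))))} := by
      intro t ⟨ht0, htbad⟩
      by_cases hcase : t ≤ T
      · exact Or.inl ⟨ht0, hcase⟩
      · right
        have hTt : T ≤ t := le_of_lt (not_le.1 hcase)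
        refine ⟨hTt, ?_⟩
        by_contra hgoodc
        push_neg at hgoodc
        obtain ⟨hc1, hc2, hc3, hc4, hc5⟩ := hTgood t hTt
        have := hc5 hgoodc
        rw [lt_div_iff₀ hc1] at htbad
        linarith [this]
    calc volume {t : ℝ | 0 ≤ t ∧ α < (-Real.log (F (k+2) t)) / (-Real.log (F (k+1) t))}
        ≤ volume (Icc (0:ℝ) T ∪ {t : ℝ | T ≤ t ∧ φ (t * R) + 1
            ≤ φ (t * R + Real.exp (-((α-1)/2 * φ (t * R))))}) := measure_mono hsubset
      _ ≤ volume (Icc (0:ℝ) T) + volume {t : ℝ | T ≤ t ∧ φ (t * R) + 1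
            ≤ φ (t * R + Real.exp (-((α-1)/2 * φ (t * R))))} := measure_union_le _ _
      _ < ⊤ := by
          apply ENNReal.add_lt_top.2
          constructor
          · rw [Real.volume_Icc]; exact ENNReal.ofReal_lt_top
          · exact badmeas φ hφmono hφnonneg R ((α-1)/2) T hR (by linarith) hT0
  refine ⟨?_, part2⟩
  -- Part 1 : liminf = 1
  obtain ⟨T₂, hT₂1, hT₂good⟩ := key 2 one_lt_two
  set u : ℝ → ℝ := fun t => Real.log (F (k+2) t) / Real.log (F (k+1) t) with hu
  have hueq : ∀ t, T₂ ≤ t → u t = (-Real.log (F (k+2) t)) / (-Real.log (F (k+1) t)) := by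
    intro t ht
    rw [hu]
    simp only [neg_div_neg_eq]
  have hfreq : ∀ α : ℝ, 1 < α → ∃ᶠ t in atTop, u t ≤ α := by
    intro α hα
    by_contra hcon
    rw [not_frequently] at hcon
    have hev : ∀ᶠ t in atTop, (0:ℝ) ≤ t ∧
        α < (-Real.log (F (k+2) t)) / (-Real.log (F (k+1) t)) := by
      filter_upwards [hcon, eventually_ge_atTop (0:ℝ), eventually_ge_atTop T₂] with t hc h0 hT
      refine ⟨h0, ?_⟩
      rw [← hueq t hT]
      exact lt_of_not_ge hc
    rw [eventually_atTop] at hev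
    obtain ⟨c, hc⟩ := hev
    have : volume (Ici c) ≤ volume {t : ℝ | 0 ≤ t ∧
        α < (-Real.log (F (k+2) t)) / (-Real.log (F (k+1) t))} :=
      measure_mono (fun t ht => hc t ht)
    rw [Real.volume_Ici] at this
    exact absurd (lt_of_le_of_lt this (part2 α hα)) (lt_irrefl _)
  have hbddbelow : IsBoundedUnder (· ≥ ·) atTop u := by
    refine ⟨0, ?_⟩
    rw [eventually_map]
    filter_upwards [eventually_ge_atTop T₂] with t ht
    obtain ⟨hc1, hc2, _, _, _⟩ := hT₂good t ht
    rw [hueq t ht]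
    positivity
  have hcobdd : IsCoboundedUnder (· ≥ ·) atTop u :=
    IsCoboundedUnder.of_frequently_le (hfreq 2 one_lt_two)
  apply le_antisymm
  · by_contra hgt
    push_neg at hgt
    have h1 := liminf_le_of_frequently_le (hfreq ((1 + liminf u atTop)/2) (by linarith)) hbddbelow
    linarith
  · by_contra hlt
    push_neg at hlt
    set ε := (1 - liminf u atTop)/2 with hε
    have hε0 : 0 < ε := by rw [hε]; linarith
    have hevge : ∀ᶠ t in atTop, 1 - ε ≤ u t := by
      filter_upwards [eventually_ge_atTop T₂,
        ev_linlog (ε*(κ*R/2)) 1 0 1 (by positivity) one_pos] with t hT hlog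
      obtain ⟨hc1, hc2, hc3, hc4, _⟩ := hT₂good t hT
      rw [hueq t hT, le_div_iff₀ hc1]
      have hlt' : Real.log t ≤ ε * (κ*R/2*t) := by
        rw [mul_one] at hlog
        nlinarith [hlog]
      have : Real.log t ≤ ε * (-Real.log (F (k+1) t)) := by
        nlinarith [hc4, hε0]
      nlinarith [hc3]
    have h2 := le_liminf_of_le hcobdd hevge
    rw [hε] at h2
    linarith

-- axiom check
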